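/- Let μ be a finitely supported ergodic ×(2,3)-invariant Borel probability measure on the unit circle 𝕋, and let maxr(μ) denote the maximum over ω ∈ supp(μ) of the multiplicative order of ω (the least positive d with ω^d = 1). Then |supp(μ)| ≤ maxr(μ) ≤ 6^{|supp(μ)|}. -/

import Mathlib

open MeasureTheory Metric Complex Filter Topology
open scoped ENNReal NNReal

noncomputable section

instance : MeasurableSpace Circle := borel Circle
instance : BorelSpace Circle := ⟨rfl⟩

/-- The normalized Haar (Lebesgue) probability measure on the circle. -/
def haarCircle : Measure Circle :=
  Measure.haarMeasure (⊤ : TopologicalSpace.PositiveCompacts Circle)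

/-- A measure on the circle is `×n`-invariant. -/
def MulInvariant (n : ℕ) (μ : Measure Circle) : Prop :=
  ∀ f : C(Circle, ℂ), ∫ ω, f (ω ^ n) ∂μ = ∫ ω, f ω ∂μ

/-- `×(2,3)`-invariant Borel probability measures. -/
def Inv23 (μ : Measure Circle) : Prop :=
  IsProbabilityMeasure μ ∧ MulInvariant 2 μ ∧ MulInvariant 3 μ

/-- Ergodicity of a `×(2,3)`-invariant probability measure. -/
def Ergodic23 (μ : Measure Circle) : Prop :=
  Inv23 μ ∧ ∀ (κ ν : Measure Circle) (t : ℝ≥0∞), Inv23 κ → Inv23 ν →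
    0 < t → t < 1 → μ = t • κ + (1 - t) • ν → κ = μ ∧ ν = μ

/-- The support of a measure: the minimal closed set of full measure. -/
def msupport (μ : Measure Circle) : Set Circle :=
  ⋂₀ {s : Set Circle | IsClosed s ∧ μ s = 1}

/-- Vague convergence of measures on the circle. -/
def VagueTendsto (μs : ℕ → Measure Circle) (μ : Measure Circle) : Prop :=
  ∀ f : C(Circle, ℂ),
    Tendsto (fun n => ∫ ω, f ω ∂(μs n)) atTop (𝓝 (∫ ω, f ω ∂μ))

/-- The `ℓ`-th Fourier coefficient of a measure on the circle. -/
def fourierCoef (μ : Measure Circle) (ℓ : ℤ) : ℂ :=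
  ∫ ω, (ω : ℂ) ^ (-ℓ) ∂μ

/-- The Herglotz transform of a measure on the circle. -/
def herglotz (μ : Measure Circle) (z : ℂ) : ℂ :=
  ∫ ω, ((ω : ℂ) + z) / ((ω : ℂ) - z) ∂μ

/-- Carathéodory function: holomorphic on the unit disk, positive real part, `ψ 0 = 1`. -/
def IsCara (ψ : ℂ → ℂ) : Prop :=
  DifferentiableOn ℂ ψ (ball (0 : ℂ) 1) ∧
    (∀ z ∈ ball (0 : ℂ) 1, 0 < (ψ z).re) ∧ ψ 0 = 1

/-- `×n`-circularity of a function on the unit disk. -/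
def IsCircular (n : ℕ) (ψ : ℂ → ℂ) : Prop :=
  ∀ z ∈ ball (0 : ℂ) 1,
    ψ (z ^ n) = (n : ℂ)⁻¹ *
      ∑ k ∈ Finset.range n, ψ (Complex.exp (2 * Real.pi * Complex.I * k / n) * z)

/-- Membership in `Cara(𝔻;2,3)`. -/
def Cara23 (ψ : ℂ → ℂ) : Prop := IsCara ψ ∧ IsCircular 2 ψ ∧ IsCircular 3 ψ

/-- Extreme points of `Cara(𝔻;2,3)`. -/
def ExtremeCara23 (ψ : ℂ → ℂ) : Prop :=
  Cara23 ψ ∧ ∀ (α β : ℂ → ℂ) (t : ℝ), Cara23 α → Cara23 β → 0 < t → t < 1 →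
    (∀ z ∈ ball (0 : ℂ) 1, ψ z = t * α z + (1 - t) * β z) →
    Set.EqOn α ψ (ball (0 : ℂ) 1) ∧ Set.EqOn β ψ (ball (0 : ℂ) 1)

/-- A function is rational on the disk. -/
def RationalOnDisk (ψ : ℂ → ℂ) : Prop :=
  ∃ p q : Polynomial ℂ, (∀ z ∈ ball (0 : ℂ) 1, q.eval z ≠ 0) ∧
    ∀ z ∈ ball (0 : ℂ) 1, ψ z = p.eval z / q.eval z

/-- Uniform convergence on compact subsets of the unit disk. -/
def CompactUniformTendsto (ψs : ℕ → ℂ → ℂ) (ψ : ℂ → ℂ) : Prop :=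
  ∀ K : Set ℂ, K ⊆ ball (0 : ℂ) 1 → IsCompact K →
    TendstoUniformlyOn (fun n => ψs n) ψ atTop K

/-- The `ℓ`-th Taylor coefficient at `0` of a function on the disk. -/
def taylorCoef (f : ℂ → ℂ) (ℓ : ℕ) : ℂ :=
  iteratedDeriv ℓ f 0 / (ℓ.factorial : ℂ)

/-- The `×(2,3)`-orbit of a point of the circle. -/
def orbit23 (ω : Circle) : Set Circle :=
  {ϑ : Circle | ∃ j k : ℕ, ϑ = ω ^ (2 ^ j * 3 ^ k)}



open scoped BoundedContinuousFunction

lemma measure_finset_eq_sum (μ : Measure Circle) (t : Finset Circle) :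
    μ ↑t = ∑ x ∈ t, μ {x} := by
  rw [show (↑t : Set Circle) = ⋃ x ∈ t, {x} from (Set.biUnion_of_singleton _).symm]
  exact measure_biUnion_finset
    (fun x _ y _ hxy => Set.disjoint_singleton.mpr hxy)
    (fun b _ => measurableSet_singleton b)

lemma msupport_closed (μ : Measure Circle) : IsClosed (msupport μ) :=
  isClosed_sInter fun _ hs => hs.1

lemma msupport_compl_null (μ : Measure Circle) (hp : IsProbabilityMeasure μ) :
    μ (msupport μ)ᶜ = 0 := by
  apply measure_null_of_locally_null
  intro x hx
  simp only [msupport, Set.mem_compl_iff, Set.mem_sInter, not_forall] at hx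
  obtain ⟨s, hs, hxs⟩ := hx
  refine ⟨sᶜ, ?_, ?_⟩
  · exact mem_nhdsWithin_of_mem_nhds (hs.1.isOpen_compl.mem_nhds hxs)
  · exact (prob_compl_eq_zero_iff hs.1.measurableSet).mpr hs.2

lemma msupport_measure_one (μ : Measure Circle) (hp : IsProbabilityMeasure μ) :
    μ (msupport μ) = 1 := by
  have := msupport_compl_null μ hp
  rwa [prob_compl_eq_zero_iff (msupport_closed μ).measurableSet] at this

lemma map_pow_eq (μ : Measure Circle) (hp : IsProbabilityMeasure μ) (n : ℕ)
    (h : MulInvariant n μ) : Measure.map (fun ω : Circle => ω ^ n) μ = μ := by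
  have hT : Measurable (fun ω : Circle => ω ^ n) := (continuous_pow n).measurable
  haveI : IsProbabilityMeasure (Measure.map (fun ω : Circle => ω ^ n) μ) :=
    Measure.isProbabilityMeasure_map hT.aemeasurable
  apply MeasureTheory.ext_of_forall_lintegral_eq_of_IsFiniteMeasure
  intro f
  have hfm : Measurable fun x : Circle => (f x : ℝ≥0∞) :=
    measurable_coe_nnreal_ennreal.comp f.continuous.measurable
  rw [lintegral_map hfm hT]
  -- now both lintegrals of compositions
  set g : Circle →ᵇ ℝ≥0 := f.compContinuous ⟨fun ω : Circle => ω ^ n, continuous_pow n⟩ with hg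
  have hge : (fun x : Circle => (f (x ^ n) : ℝ≥0∞)) = fun x => (g x : ℝ≥0∞) := rfl
  rw [hge]
  have h1 : (∫⁻ x, (g x : ℝ≥0∞) ∂μ) ≠ ⊤ :=
    (BoundedContinuousFunction.lintegral_lt_top_of_nnreal μ g).ne
  have h2 : (∫⁻ x, (f x : ℝ≥0∞) ∂μ) ≠ ⊤ :=
    (BoundedContinuousFunction.lintegral_lt_top_of_nnreal μ f).ne
  rw [← ENNReal.toReal_eq_toReal_iff' h1 h2,
    BoundedContinuousFunction.toReal_lintegral_coe_eq_integral,
    BoundedContinuousFunction.toReal_lintegral_coe_eq_integral]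
  -- now real integrals; use the complex hypothesis
  have hF : Continuous fun x : Circle => (RCLike.ofReal (K := ℂ) (f x : ℝ)) := by
    exact RCLike.continuous_ofReal.comp (NNReal.continuous_coe.comp f.continuous)
  have key := h ⟨fun x : Circle => (RCLike.ofReal (K := ℂ) (f x : ℝ)), hF⟩
  simp only [ContinuousMap.coe_mk] at key
  apply RCLike.ofReal_injective (K := ℂ)
  rw [← integral_ofReal (𝕜 := ℂ), ← integral_ofReal (𝕜 := ℂ)]
  exact key

open scoped Classical

variable {μ : Measure Circle}

lemma mem_msupport_of_mass_ne (hp : IsProbabilityMeasure μ) {x : Circle}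
    (hx : μ {x} ≠ 0) : x ∈ msupport μ := by
  by_contra hxs
  apply hx
  have : ({x} : Set Circle) ⊆ (msupport μ)ᶜ := by
    simpa using hxs
  exact le_antisymm (le_trans (measure_mono this) (msupport_compl_null μ hp).le) zero_le

lemma mass_pos (hp : IsProbabilityMeasure μ) (hfin : (msupport μ).Finite) :
    ∀ x ∈ hfin.toFinset, μ {x} ≠ 0 := by
  intro x hx
  rw [Set.Finite.mem_toFinset] at hx
  intro h0
  have hclosed : IsClosed (msupport μ \ {x}) :=
    (hfin.subset Set.diff_subset).isClosed
  have hfull : μ (msupport μ \ {x}) = 1 := by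
    rw [measure_diff_null h0]; exact msupport_measure_one μ hp
  have hsub : msupport μ ⊆ msupport μ \ {x} :=
    Set.sInter_subset_of_mem ⟨hclosed, hfull⟩
  exact (hsub hx).2 rfl

lemma measure_eq_inter_msupport (hp : IsProbabilityMeasure μ) (E : Set Circle) :
    μ E = μ (E ∩ msupport μ) :=
  (measure_inter_conull (msupport_compl_null μ hp)).symm

lemma fiber_sum (hp : IsProbabilityMeasure μ) (hfin : (msupport μ).Finite) {n : ℕ}
    (hmap : Measure.map (fun ω : Circle => ω ^ n) μ = μ) (θ : Circle) :
    μ {θ} = ∑ x ∈ hfin.toFinset.filter (fun x => x ^ n = θ), μ {x} := by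
  have hT : Measurable (fun ω : Circle => ω ^ n) := (continuous_pow n).measurable
  have h1 : μ {θ} = μ ((fun ω : Circle => ω ^ n) ⁻¹' {θ}) := by
    conv_lhs => rw [← hmap]
    rw [Measure.map_apply hT (measurableSet_singleton θ)]
  have h2 : ((fun ω : Circle => ω ^ n) ⁻¹' {θ}) ∩ msupport μ
      = ↑(hfin.toFinset.filter (fun x => x ^ n = θ)) := by
    ext y
    simp [Set.Finite.mem_toFinset, and_comm]
  rw [h1, measure_eq_inter_msupport hp, h2, measure_finset_eq_sum]

lemma pow_mem_support (hp : IsProbabilityMeasure μ) (hfin : (msupport μ).Finite) {n : ℕ}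
    (hmap : Measure.map (fun ω : Circle => ω ^ n) μ = μ) :
    ∀ x ∈ hfin.toFinset, x ^ n ∈ hfin.toFinset := by
  intro x hx
  have hxp := mass_pos hp hfin x hx
  have : μ {x ^ n} ≠ 0 := by
    rw [fiber_sum hp hfin hmap (x ^ n)]
    intro h0
    rw [Finset.sum_eq_zero_iff] at h0
    exact hxp (h0 x (Finset.mem_filter.mpr ⟨hx, rfl⟩))
  rw [Set.Finite.mem_toFinset]
  exact mem_msupport_of_mass_ne hp this

lemma pow_surj (hp : IsProbabilityMeasure μ) (hfin : (msupport μ).Finite) {n : ℕ}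
    (hmap : Measure.map (fun ω : Circle => ω ^ n) μ = μ) :
    ∀ θ ∈ hfin.toFinset, ∃ x ∈ hfin.toFinset, x ^ n = θ := by
  intro θ hθ
  by_contra hc
  push_neg at hc
  apply mass_pos hp hfin θ hθ
  rw [fiber_sum hp hfin hmap θ]
  apply Finset.sum_eq_zero
  intro x hx
  rw [Finset.mem_filter] at hx
  exact absurd hx.2 (hc x hx.1)

lemma pow_inj (hp : IsProbabilityMeasure μ) (hfin : (msupport μ).Finite) {n : ℕ}
    (hmap : Measure.map (fun ω : Circle => ω ^ n) μ = μ) :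
    Set.InjOn (fun x : Circle => x ^ n) ↑hfin.toFinset := by
  have himage : hfin.toFinset.image (fun x : Circle => x ^ n) = hfin.toFinset := by
    apply Finset.Subset.antisymm
    · intro y hy
      rw [Finset.mem_image] at hy
      obtain ⟨x, hx, rfl⟩ := hy
      exact pow_mem_support hp hfin hmap x hx
    · intro θ hθ
      obtain ⟨x, hx, hxe⟩ := pow_surj hp hfin hmap θ hθ
      exact Finset.mem_image.mpr ⟨x, hx, hxe⟩
  rw [← Finset.card_image_iff]
  rw [himage]

lemma mass_pow_eq (hp : IsProbabilityMeasure μ) (hfin : (msupport μ).Finite) {n : ℕ}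
    (hmap : Measure.map (fun ω : Circle => ω ^ n) μ = μ) :
    ∀ x ∈ hfin.toFinset, μ {x ^ n} = μ {x} := by
  intro x hx
  rw [fiber_sum hp hfin hmap (x ^ n)]
  have : hfin.toFinset.filter (fun y => y ^ n = x ^ n) = {x} := by
    apply Finset.eq_singleton_iff_unique_mem.mpr
    refine ⟨Finset.mem_filter.mpr ⟨hx, rfl⟩, ?_⟩
    intro y hy
    rw [Finset.mem_filter] at hy
    exact pow_inj hp hfin hmap hy.1 hx hy.2
  rw [this, Finset.sum_singleton]
lemma pow_pow_cancel (hp : IsProbabilityMeasure μ) (hfin : (msupport μ).Finite) {n : ℕ}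
    (hmap : Measure.map (fun ω : Circle => ω ^ n) μ = μ) (a : ℕ) :
    ∀ u ∈ hfin.toFinset, ∀ v ∈ hfin.toFinset, u ^ (n ^ a) = v ^ (n ^ a) → u = v := by
  induction a with
  | zero => intro u _ v _ h; simpa using h
  | succ a ih =>
    intro u hu v hv h
    have h' : (u ^ n) ^ n ^ a = (v ^ n) ^ n ^ a := by
      rw [← pow_mul, ← pow_mul, ← pow_succ']
      exact h
    have := ih (u ^ n) (pow_mem_support hp hfin hmap u hu)
      (v ^ n) (pow_mem_support hp hfin hmap v hv) h'
    exact pow_inj hp hfin hmap hu hv this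

lemma pow_pow_mem (hp : IsProbabilityMeasure μ) (hfin : (msupport μ).Finite) {n : ℕ}
    (hmap : Measure.map (fun ω : Circle => ω ^ n) μ = μ) {x : Circle}
    (hx : x ∈ hfin.toFinset) (k : ℕ) : x ^ (n ^ k) ∈ hfin.toFinset := by
  induction k with
  | zero => simpa using hx
  | succ k ih =>
    have e : x ^ (n ^ (k + 1)) = (x ^ (n ^ k)) ^ n := by
      rw [← pow_mul, pow_succ]
    rw [e]; exact pow_mem_support hp hfin hmap _ ih

lemma exists_cycle (hp : IsProbabilityMeasure μ) (hfin : (msupport μ).Finite) {n : ℕ}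
    (hmap : Measure.map (fun ω : Circle => ω ^ n) μ = μ) :
    ∀ x ∈ hfin.toFinset, ∃ c, 0 < c ∧ c ≤ hfin.toFinset.card ∧ x ^ (n ^ c) = x := by
  intro x hx
  have hcard : (hfin.toFinset).card < (Finset.range (hfin.toFinset.card + 1)).card := by
    simp
  obtain ⟨a, ha, b, hb, hab, heq⟩ :=
    Finset.exists_ne_map_eq_of_card_lt_of_maps_to hcard
      (fun k _ => pow_pow_mem hp hfin hmap hx k)
  have main : ∀ a b : ℕ, a < b → b ≤ hfin.toFinset.card → x ^ (n ^ a) = x ^ (n ^ b) →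
      ∃ c, 0 < c ∧ c ≤ hfin.toFinset.card ∧ x ^ (n ^ c) = x := by
    intro a b hlt hble heq
    refine ⟨b - a, Nat.sub_pos_of_lt hlt, le_trans (Nat.sub_le b a) hble, ?_⟩
    have hsplit : x ^ (n ^ b) = (x ^ (n ^ (b - a))) ^ (n ^ a) := by
      rw [← pow_mul, ← pow_add, Nat.sub_add_cancel hlt.le]
    exact (pow_pow_cancel hp hfin hmap a x hx (x ^ (n ^ (b - a)))
      (pow_pow_mem hp hfin hmap hx _) (by rw [← hsplit]; exact heq)).symm
  rcases lt_or_gt_of_ne hab with hlt | hlt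
  · exact main a b hlt (Nat.lt_succ_iff.mp (Finset.mem_range.mp hb)) heq
  · exact main b a hlt (Nat.lt_succ_iff.mp (Finset.mem_range.mp ha)) heq.symm

lemma order_dvd_of_cycle {x : Circle} {m : ℕ} (hm : 1 ≤ m) (h : x ^ m = x) :
    orderOf x ∣ m - 1 := by
  apply orderOf_dvd_of_pow_eq_one
  have h1 : x ^ (m - 1) * x = x := by
    rw [← pow_succ, Nat.sub_add_cancel hm]
    exact h
  calc x ^ (m - 1) = x ^ (m - 1) * x * x⁻¹ := by group
    _ = x * x⁻¹ := by rw [h1]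
    _ = 1 := mul_inv_cancel x

lemma order_facts (hp : IsProbabilityMeasure μ) (hfin : (msupport μ).Finite) {n : ℕ}
    (hn : 2 ≤ n) (hmap : Measure.map (fun ω : Circle => ω ^ n) μ = μ) :
    ∀ x ∈ hfin.toFinset, 0 < orderOf x ∧ orderOf x ≤ n ^ hfin.toFinset.card - 1 ∧
      Nat.Coprime (orderOf x) n := by
  intro x hx
  obtain ⟨c, hc0, hcle, hcyc⟩ := exists_cycle hp hfin hmap x hx
  have hm1 : 1 ≤ n ^ c := Nat.one_le_pow _ _ (by omega)
  have h2m : 2 ≤ n ^ c := by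
    calc 2 ≤ n := hn
      _ = n ^ 1 := (pow_one n).symm
      _ ≤ n ^ c := Nat.pow_le_pow_right (by omega) hc0
  have hdvd : orderOf x ∣ n ^ c - 1 := order_dvd_of_cycle hm1 hcyc
  have hpos1 : 0 < n ^ c - 1 := by omega
  constructor
  · exact Nat.pos_of_ne_zero (by
      intro h0
      rw [h0] at hdvd
      omega)
  constructor
  · have h1 : orderOf x ≤ n ^ c - 1 := Nat.le_of_dvd hpos1 hdvd
    have h2 : n ^ c ≤ n ^ hfin.toFinset.card := Nat.pow_le_pow_right (by omega) hcle
    omega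
  · have hcop : Nat.Coprime (n ^ c - 1) n := by
      have h1 : Nat.Coprime (n ^ c - 1) (n ^ c) := by
        have : n ^ c = (n ^ c - 1) + 1 := by omega
        rw [this]
        simpa using Nat.coprime_succ_self (n ^ c - 1)
      exact h1.coprime_dvd_right (dvd_pow_self n (by omega))
    exact Nat.Coprime.coprime_dvd_left hdvd hcop
lemma restrict_eq_sum (hp : IsProbabilityMeasure μ) (hfin : (msupport μ).Finite)
    {V : Set Circle} (T : Finset Circle) (hT : ↑T = V ∩ msupport μ) :
    μ.restrict V = ∑ x ∈ T, μ {x} • Measure.dirac x := by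
  ext E hE
  rw [Measure.restrict_apply hE, Measure.finset_sum_apply]
  have h1 : μ (E ∩ V) = μ (E ∩ V ∩ msupport μ) := measure_eq_inter_msupport hp _
  have h2 : E ∩ V ∩ msupport μ = ↑(T.filter (· ∈ E)) := by
    ext y
    constructor
    · rintro ⟨⟨hyE, hyV⟩, hyS⟩
      have : y ∈ (↑T : Set Circle) := by rw [hT]; exact ⟨hyV, hyS⟩
      simp only [Finset.coe_filter, Set.mem_setOf_eq, Finset.mem_coe] at this ⊢
      exact ⟨this, hyE⟩
    · intro hy
      simp only [Finset.coe_filter, Set.mem_setOf_eq] at hy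
      have : y ∈ V ∩ msupport μ := by rw [← hT]; exact_mod_cast hy.1
      exact ⟨⟨hy.2, this.1⟩, this.2⟩
  rw [h1, h2, measure_finset_eq_sum, Finset.sum_filter]
  apply Finset.sum_congr rfl
  intro x _
  rw [Measure.smul_apply, Measure.dirac_apply, smul_eq_mul]
  simp only [Set.indicator_apply, Pi.one_apply, mul_ite, mul_one, mul_zero]

lemma integral_sum_dirac (hp : IsProbabilityMeasure μ) (T : Finset Circle) (g : Circle → ℂ) (hg : Continuous g) :
    ∫ ω, g ω ∂(∑ x ∈ T, μ {x} • Measure.dirac x)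
      = ∑ x ∈ T, (μ {x}).toReal • g x := by
  rw [integral_finset_sum_measure]
  · apply Finset.sum_congr rfl
    intro x _
    rw [integral_smul_measure, integral_dirac]
  · intro x _
    apply Integrable.smul_measure
    · exact hg.integrable_of_hasCompactSupport (HasCompactSupport.of_compactSpace _)
    · exact measure_ne_top μ _


lemma sum_pow_reindex (hp : IsProbabilityMeasure μ) (hfin : (msupport μ).Finite) {n : ℕ}
    (hmap : Measure.map (fun ω : Circle => ω ^ n) μ = μ) (T : Finset Circle)
    (hTS : T ⊆ hfin.toFinset) (hstable : ∀ x ∈ hfin.toFinset, (x ∈ T ↔ x ^ n ∈ T))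
    (f : Circle → ℂ) :
    ∑ x ∈ T, (μ {x}).toReal • f (x ^ n) = ∑ x ∈ T, (μ {x}).toReal • f x := by
  have step1 : ∑ x ∈ T, (μ {x}).toReal • f (x ^ n)
      = ∑ x ∈ T, (μ {x ^ n}).toReal • f (x ^ n) := by
    apply Finset.sum_congr rfl
    intro x hx
    rw [mass_pow_eq hp hfin hmap x (hTS hx)]
  rw [step1]
  apply Finset.sum_bij (i := fun (x : Circle) (_ : x ∈ T) => x ^ n)
  · intro a ha
    exact (hstable a (hTS ha)).mp ha
  · intro a ha b hb hab
    exact pow_inj hp hfin hmap (hTS ha) (hTS hb) hab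
  · intro y hy
    obtain ⟨x, hxS, hxe⟩ := pow_surj hp hfin hmap y (hTS hy)
    refine ⟨x, ?_, hxe⟩
    apply (hstable x hxS).mpr
    rw [hxe]
    exact hy
  · intro a _
    rfl

lemma mulInvariant_smul_sum (hp : IsProbabilityMeasure μ) (hfin : (msupport μ).Finite) {n : ℕ}
    (hmap : Measure.map (fun ω : Circle => ω ^ n) μ = μ) (T : Finset Circle)
    (hTS : T ⊆ hfin.toFinset) (hstable : ∀ x ∈ hfin.toFinset, (x ∈ T ↔ x ^ n ∈ T))
    (c : ℝ≥0∞) :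
    MulInvariant n (c • ∑ x ∈ T, μ {x} • Measure.dirac x) := by
  intro f
  rw [integral_smul_measure, integral_smul_measure,
    integral_sum_dirac hp T (fun ω => f (ω ^ n)) (f.continuous.comp (continuous_pow n)),
    integral_sum_dirac hp T f f.continuous,
    sum_pow_reindex hp hfin hmap T hTS hstable f]

theorem card_support_le_maxr_le (μ : Measure Circle) (hμ : Ergodic23 μ)
    (hfin : (msupport μ).Finite) :
    hfin.toFinset.card ≤ hfin.toFinset.sup (fun ω => orderOf ω) ∧
    hfin.toFinset.sup (fun ω => orderOf ω) ≤ 6 ^ hfin.toFinset.card := by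
  classical
  obtain ⟨⟨hp, h2, h3⟩, herg⟩ := hμ
  have hmap2 : Measure.map (fun ω : Circle => ω ^ 2) μ = μ := map_pow_eq μ hp 2 h2
  have hmap3 : Measure.map (fun ω : Circle => ω ^ 3) μ = μ := map_pow_eq μ hp 3 h3
  have hScoe : ↑hfin.toFinset = msupport μ := hfin.coe_toFinset
  -- Part 2
  have part2 : hfin.toFinset.sup (fun ω => orderOf ω) ≤ 6 ^ hfin.toFinset.card := by
    apply Finset.sup_le
    intro x hx
    obtain ⟨-, hle, -⟩ := order_facts hp hfin (by norm_num) hmap2 x hx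
    have h26 : (2:ℕ) ^ hfin.toFinset.card ≤ 6 ^ hfin.toFinset.card :=
      Nat.pow_le_pow_left (by norm_num) _
    exact le_trans hle (le_trans (Nat.sub_le _ _) h26)
  refine ⟨?_, part2⟩
  -- S is nonempty
  have hSne : hfin.toFinset.Nonempty := by
    rw [Finset.nonempty_iff_ne_empty]
    intro hempty
    have h1 : msupport μ = ∅ := by rw [← hScoe, hempty]; simp
    have := msupport_measure_one μ hp
    rw [h1] at this
    simp at this
  set d := hfin.toFinset.sup (fun ω => orderOf ω) with hd
  obtain ⟨x₀, hx₀S, hx₀⟩ := Finset.exists_mem_eq_sup hfin.toFinset hSne (fun ω => orderOf ω)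
  have hd0 : 0 < d := by
    rw [hd, hx₀]
    exact (order_facts hp hfin (by norm_num) hmap2 x₀ hx₀S).1
  set A := hfin.toFinset.filter (fun x => orderOf x = d) with hA
  have hAS : A ⊆ hfin.toFinset := Finset.filter_subset _ _
  -- stability of A and of S \ A
  have hcop : ∀ n : ℕ, 2 ≤ n → Measure.map (fun ω : Circle => ω ^ n) μ = μ →
      ∀ x ∈ hfin.toFinset, orderOf (x ^ n) = orderOf x := by
    intro n hn hmap x hx
    exact Nat.Coprime.orderOf_pow (order_facts hp hfin hn hmap x hx).2.2
  have hstableA : ∀ n : ℕ, 2 ≤ n → Measure.map (fun ω : Circle => ω ^ n) μ = μ →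
      ∀ x ∈ hfin.toFinset, (x ∈ A ↔ x ^ n ∈ A) := by
    intro n hn hmap x hx
    rw [hA, Finset.mem_filter, Finset.mem_filter]
    rw [hcop n hn hmap x hx]
    have hxn : x ^ n ∈ hfin.toFinset := pow_mem_support hp hfin hmap x hx
    tauto
  have hstableB : ∀ n : ℕ, 2 ≤ n → Measure.map (fun ω : Circle => ω ^ n) μ = μ →
      ∀ x ∈ hfin.toFinset, (x ∈ hfin.toFinset \ A ↔ x ^ n ∈ hfin.toFinset \ A) := by
    intro n hn hmap x hx
    have hxn : x ^ n ∈ hfin.toFinset := pow_mem_support hp hfin hmap x hx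
    rw [Finset.mem_sdiff, Finset.mem_sdiff]
    have := hstableA n hn hmap x hx
    tauto
  -- A = S by ergodicity
  have hAeq : A = hfin.toFinset := by
    by_contra hne
    obtain ⟨y, hyS, hyA⟩ := Finset.exists_of_ssubset (hAS.ssubset_of_ne hne)
    set V : Set Circle := ↑A with hV
    have hVmeas : MeasurableSet V := A.finite_toSet.measurableSet
    have hVT : ↑A = V ∩ msupport μ := by
      rw [← hScoe, hV]
      ext z
      simp only [Set.mem_inter_iff, Finset.mem_coe]
      exact ⟨fun h => ⟨h, hAS h⟩, fun h => h.1⟩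
    have hVcT : ↑(hfin.toFinset \ A) = Vᶜ ∩ msupport μ := by
      ext z
      simp only [hV, Finset.coe_sdiff, Set.mem_diff, Set.mem_inter_iff, Set.mem_compl_iff,
        Finset.mem_coe, Set.Finite.mem_toFinset]
      tauto
    have hrA := restrict_eq_sum hp hfin A hVT
    have hrB := restrict_eq_sum hp hfin (hfin.toFinset \ A) hVcT
    set t := μ V with ht
    have hx₀A : x₀ ∈ A := Finset.mem_filter.mpr ⟨hx₀S, hx₀.symm⟩
    have htne0 : t ≠ 0 := by
      intro h0
      apply mass_pos hp hfin x₀ hx₀S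
      have hsub : ({x₀} : Set Circle) ⊆ V := by
        intro z hz
        rw [Set.mem_singleton_iff] at hz
        subst hz
        exact Finset.mem_coe.mpr hx₀A
      exact le_antisymm (h0 ▸ measure_mono hsub) zero_le
    have htle1 : t ≤ 1 := prob_le_one
    have htnetop : t ≠ ⊤ := (lt_of_le_of_lt htle1 ENNReal.one_lt_top).ne
    have hyV : ({y} : Set Circle) ⊆ Vᶜ := by
      intro z hz
      rw [Set.mem_singleton_iff] at hz
      subst hz
      simp only [Set.mem_compl_iff, hV, Finset.mem_coe]
      exact hyA
    have htlt1 : t < 1 := by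
      have hμy : μ {y} ≠ 0 := mass_pos hp hfin y hyS
      have hdisj : t + μ {y} ≤ 1 := by
        have hd2 : Disjoint V ({y} : Set Circle) :=
          Set.disjoint_right.mpr (fun z hz => fun hzV => (hyV hz) hzV)
        calc t + μ {y} = μ (V ∪ {y}) := (measure_union hd2 (measurableSet_singleton y)).symm
          _ ≤ μ Set.univ := measure_mono (Set.subset_univ _)
          _ = 1 := measure_univ
      have := ENNReal.lt_add_right htnetop hμy
      exact lt_of_lt_of_le this hdisj
    have h1tne0 : (1 : ℝ≥0∞) - t ≠ 0 := by
      simp only [ne_eq, tsub_eq_zero_iff_le, not_le]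
      exact htlt1
    have h1tnetop : (1 : ℝ≥0∞) - t ≠ ⊤ :=
      (tsub_le_self.trans_lt ENNReal.one_lt_top).ne
    set κ := t⁻¹ • μ.restrict V with hκ
    set ν := ((1 : ℝ≥0∞) - t)⁻¹ • μ.restrict Vᶜ with hν
    have hκprob : IsProbabilityMeasure κ := by
      constructor
      rw [hκ, Measure.smul_apply, Measure.restrict_apply_univ, smul_eq_mul]
      exact ENNReal.inv_mul_cancel htne0 htnetop
    have hVc : μ Vᶜ = 1 - t := by
      rw [measure_compl hVmeas htnetop, measure_univ]
    have hνprob : IsProbabilityMeasure ν := by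
      constructor
      rw [hν, Measure.smul_apply, Measure.restrict_apply_univ, hVc, smul_eq_mul]
      exact ENNReal.inv_mul_cancel h1tne0 h1tnetop
    have hκ2 : MulInvariant 2 κ := by
      rw [hκ, hrA]
      exact mulInvariant_smul_sum hp hfin hmap2 A hAS (hstableA 2 (by norm_num) hmap2) _
    have hκ3 : MulInvariant 3 κ := by
      rw [hκ, hrA]
      exact mulInvariant_smul_sum hp hfin hmap3 A hAS (hstableA 3 (by norm_num) hmap3) _
    have hν2 : MulInvariant 2 ν := by
      rw [hν, hrB]
      exact mulInvariant_smul_sum hp hfin hmap2 (hfin.toFinset \ A) (Finset.sdiff_subset)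
        (hstableB 2 (by norm_num) hmap2) _
    have hν3 : MulInvariant 3 ν := by
      rw [hν, hrB]
      exact mulInvariant_smul_sum hp hfin hmap3 (hfin.toFinset \ A) (Finset.sdiff_subset)
        (hstableB 3 (by norm_num) hmap3) _
    have hdecomp : μ = t • κ + ((1 : ℝ≥0∞) - t) • ν := by
      rw [hκ, hν, smul_smul, smul_smul, ENNReal.mul_inv_cancel htne0 htnetop,
        ENNReal.mul_inv_cancel h1tne0 h1tnetop, one_smul, one_smul,
        Measure.restrict_add_restrict_compl hVmeas]
    obtain ⟨hκμ, -⟩ := herg κ ν t ⟨hκprob, hκ2, hκ3⟩ ⟨hνprob, hν2, hν3⟩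
      (zero_lt_iff.mpr htne0) htlt1 hdecomp
    have hκVc : κ Vᶜ = 0 := by
      rw [hκ, Measure.smul_apply, Measure.restrict_apply hVmeas.compl]
      simp
    rw [hκμ] at hκVc
    apply mass_pos hp hfin y hyS
    apply le_antisymm _ zero_le
    calc μ {y} ≤ μ Vᶜ := measure_mono hyV
      _ = 0 := hκVc
  -- Part 1 conclusion
  have hallord : ∀ x ∈ hfin.toFinset, orderOf x = d := by
    intro x hx
    rw [← hAeq] at hx
    exact (Finset.mem_filter.mp hx).2
  have hroots : ∀ x ∈ hfin.toFinset, (x : ℂ) ^ d = 1 := by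
    intro x hx
    have : x ^ d = 1 := by
      rw [← hallord x hx]
      exact pow_orderOf_eq_one x
    calc (x : ℂ) ^ d = ((x ^ d : Circle) : ℂ) := (map_pow Circle.coeHom x d).symm
      _ = 1 := by rw [this]; rfl
  have hinj : Set.InjOn (fun x : Circle => (x : ℂ)) ↑hfin.toFinset :=
    fun a _ b _ h => Circle.coe_injective h
  have hsub : hfin.toFinset.image (fun x : Circle => (x : ℂ))
      ⊆ (Polynomial.nthRoots d (1 : ℂ)).toFinset := by
    intro z hz
    rw [Finset.mem_image] at hz
    obtain ⟨x, hx, rfl⟩ := hz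
    rw [Multiset.mem_toFinset, Polynomial.mem_nthRoots hd0]
    exact hroots x hx
  calc hfin.toFinset.card = (hfin.toFinset.image (fun x : Circle => (x : ℂ))).card :=
        (Finset.card_image_of_injOn hinj).symm
    _ ≤ (Polynomial.nthRoots d (1 : ℂ)).toFinset.card := Finset.card_le_card hsub
    _ ≤ Multiset.card (Polynomial.nthRoots d (1 : ℂ)) := Multiset.toFinset_card_le _
    _ ≤ d := Polynomial.card_nthRoots d 1

end
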